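/- Let φ be the morphism φ(A) = A^p B, φ(B) = A^q B with p > q ≥ 1, let u_β be its fixed point, and let U_n = |φ^n(A)|. Define w^(0) = B, w^(n) = B·φ(w^(n-1)), and w = lim w^(n). Fix n ∈ ℕ and choose k with n ≤ |w^(k)|. If the normal U-representation of U_{k+1} − n is (e_k, e_{k-1}, …, e_1, e_0), then the prefix ŵ of w of length n satisfies |ŵ|_B = U_k − Σ_{j=1}^{k} e_j U_{j-1}. -/

import Mathlib

/-- Number of occurrences of the letter `A` (encoded as `false`). -/
def countA (w : List Bool) : ℕ := w.count false

/-- Number of occurrences of the letter `B` (encoded as `true`). -/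
def countB (w : List Bool) : ℕ := w.count true

/-- Extension of a morphism (given on letters) to finite words. -/
def applyM (φ : Bool → List Bool) (w : List Bool) : List Bool := (w.map φ).flatten

/-- `w` is a factor of the infinite word `u`. -/
def IsFactor (u : ℕ → Bool) (w : List Bool) : Prop :=
  ∃ i, w = (List.range w.length).map (fun j => u (i + j))

/-- The prefix of length `n` of the infinite word `u`. -/
def prefWord (u : ℕ → Bool) (n : ℕ) : List Bool := (List.range n).map u

/-- The finite word `w` is a prefix of the infinite word `u`. -/
def IsPrefixOf (w : List Bool) (u : ℕ → Bool) : Prop := w = prefWord u w.length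

/-- Abelian complexity: number of Parikh vectors of factors of length `n`. -/
noncomputable def AC (u : ℕ → Bool) (n : ℕ) : ℕ :=
  Set.ncard {P : ℕ × ℕ | ∃ w, IsFactor u w ∧ w.length = n ∧ P = (countA w, countB w)}

/-- `n`-fold iterate of the morphism `φ` applied to the letter `a`. -/
def iterW (φ : Bool → List Bool) (n : ℕ) (a : Bool) : List Bool := (applyM φ)^[n] [a]

/-- The morphism `A ↦ AᵖB, B ↦ A^q` (simple Parry case). -/
def simpleM (p q : ℕ) : Bool → List Bool
  | false => List.replicate p false ++ [true]
  | true  => List.replicate q false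

/-- The morphism `A ↦ AᵖB, B ↦ A^qB` (non-simple Parry case). -/
def nonsimpleM (p q : ℕ) : Bool → List Bool
  | false => List.replicate p false ++ [true]
  | true  => List.replicate q false ++ [true]

/-- Greedy digits `(d_N, …, d_0)` of `x` in the base given by `U`
    (assuming `U 0 = 1`): `d_j = ⌊x_j / U_j⌋`, `x_{j-1} = x_j mod U_j`. -/
def gdigits (U : ℕ → ℕ) : ℕ → ℕ → List ℕ
  | 0, x => [x]
  | j+1, x => x / U (j+1) :: gdigits U j (x % U (j+1))

/-- The digit `d_j` of the normal `U`-representation `(d_N, …, d_0)` of `n`. -/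
def dig (U : ℕ → ℕ) (N n j : ℕ) : ℕ := (gdigits U N n).getD (N - j) 0

/-- The words `w⁽ⁿ⁾` of the non-simple Parry case: `w⁽⁰⁾ = B`, `w⁽ⁿ⁾ = B·φ(w⁽ⁿ⁻¹⁾)`. -/
def wNon (φ : Bool → List Bool) : ℕ → List Bool
  | 0 => [true]
  | n+1 => true :: applyM φ (wNon φ n)

/-- The words `w⁽ᴺ⁾ = B·φ(A^{q-1})·φ³(A^{q-1})⋯φ^{2N-1}(A^{q-1})` of the simple Parry case. -/
def wSim (φ : Bool → List Bool) (q : ℕ) (N : ℕ) : List Bool :=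
  true :: ((List.range N).map
    (fun k => (applyM φ)^[2*k+1] (List.replicate (q-1) false))).flatten
section Aux

/-- `g` function: B-count of greedy-prefix decomposition. -/
def gB (φ : Bool → List Bool) : ℕ → ℕ → ℕ
  | 0, _ => 0
  | m+1, r => r / (iterW φ m false).length * countB (iterW φ m false) +
      gB φ m (r % (iterW φ m false).length)

lemma join_cons' {α : Type*} (x : List α) (L : List (List α)) : (x :: L).flatten = x ++ L.flatten := rfl

lemma applyM_nil (φ : Bool → List Bool) : applyM φ [] = [] := rfl

lemma applyM_cons (φ : Bool → List Bool) (a : Bool) (w : List Bool) :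
    applyM φ (a :: w) = φ a ++ applyM φ w := by simp [applyM]

lemma applyM_append (φ : Bool → List Bool) (x y : List Bool) :
    applyM φ (x ++ y) = applyM φ x ++ applyM φ y := by simp [applyM]

lemma iterW_succ (φ : Bool → List Bool) (m : ℕ) (a : Bool) :
    iterW φ (m+1) a = applyM φ (iterW φ m a) := by
  simp [iterW, Function.iterate_succ_apply']

lemma iter_nil (φ : Bool → List Bool) (m : ℕ) : (applyM φ)^[m] [] = [] := by
  induction m with
  | zero => rfl
  | succ m ih => rw [Function.iterate_succ_apply, applyM_nil, ih]

lemma iter_append (φ : Bool → List Bool) (m : ℕ) (x y : List Bool) :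
    (applyM φ)^[m] (x ++ y) = (applyM φ)^[m] x ++ (applyM φ)^[m] y := by
  induction m generalizing x y with
  | zero => rfl
  | succ m ih => rw [Function.iterate_succ_apply, Function.iterate_succ_apply,
      Function.iterate_succ_apply, applyM_append, ih]

lemma iter_replicate (φ : Bool → List Bool) (m N : ℕ) (a : Bool) :
    (applyM φ)^[m] (List.replicate N a) = (List.replicate N ((applyM φ)^[m] [a])).flatten := by
  induction N with
  | zero => simp [iter_nil]
  | succ N ih =>
      rw [List.replicate_succ, List.replicate_succ, join_cons',
        show (a :: List.replicate N a) = [a] ++ List.replicate N a from rfl,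
        iter_append, ih]

lemma iterW_false_succ (p q m : ℕ) :
    iterW (nonsimpleM p q) (m+1) false =
      (List.replicate p (iterW (nonsimpleM p q) m false)).flatten ++ iterW (nonsimpleM p q) m true := by
  have h1 : iterW (nonsimpleM p q) (m+1) false
      = (applyM (nonsimpleM p q))^[m] (applyM (nonsimpleM p q) [false]) := by
    simp [iterW, Function.iterate_succ_apply]
  have h2 : applyM (nonsimpleM p q) [false] = List.replicate p false ++ [true] := by
    simp [applyM, nonsimpleM]
  rw [h1, h2, iter_append, iter_replicate]
  rfl

lemma iterW_true_succ (p q m : ℕ) :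
    iterW (nonsimpleM p q) (m+1) true =
      (List.replicate q (iterW (nonsimpleM p q) m false)).flatten ++ iterW (nonsimpleM p q) m true := by
  have h1 : iterW (nonsimpleM p q) (m+1) true
      = (applyM (nonsimpleM p q))^[m] (applyM (nonsimpleM p q) [true]) := by
    simp [iterW, Function.iterate_succ_apply]
  have h2 : applyM (nonsimpleM p q) [true] = List.replicate q false ++ [true] := by
    simp [applyM, nonsimpleM]
  rw [h1, h2, iter_append, iter_replicate]
  rfl

lemma length_join_replicate (N : ℕ) (X : List Bool) :
    ((List.replicate N X).flatten).length = N * X.length := by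
  induction N with
  | zero => simp
  | succ N ih => rw [List.replicate_succ, join_cons', List.length_append, ih]; ring

lemma countB_append (x y : List Bool) : countB (x ++ y) = countB x + countB y := by
  simp [countB, List.count_append]

lemma countB_join_replicate (N : ℕ) (X : List Bool) :
    countB ((List.replicate N X).flatten) = N * countB X := by
  induction N with
  | zero => simp [countB]
  | succ N ih => rw [List.replicate_succ, join_cons', countB_append, ih]; ring

lemma countB_applyM (p q : ℕ) (w : List Bool) :
    countB (applyM (nonsimpleM p q) w) = w.length := by
  induction w with
  | nil => rfl
  | cons a w ih =>
      rw [applyM_cons, countB_append, ih]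
      have : countB (nonsimpleM p q a) = 1 := by
        cases a <;> simp [nonsimpleM, countB, List.count_append, List.count_replicate]
      rw [this]; simp [Nat.add_comm]

/-- lengths -/
lemma len_pos (p q : ℕ) (m : ℕ) (a : Bool) : 1 ≤ (iterW (nonsimpleM p q) m a).length := by
  induction m generalizing a with
  | zero => simp [iterW]
  | succ m ih =>
      cases a
      · rw [iterW_false_succ]
        have := ih true
        simp [List.length_append]
        omega
      · rw [iterW_true_succ]
        have := ih true
        simp [List.length_append]
        omega

lemma lenV_le_lenU (p q : ℕ) (hpq : q ≤ p) (m : ℕ) :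
    (iterW (nonsimpleM p q) m true).length ≤ (iterW (nonsimpleM p q) m false).length := by
  induction m with
  | zero => simp [iterW]
  | succ m ih =>
      rw [iterW_false_succ, iterW_true_succ]
      rw [List.length_append, List.length_append, length_join_replicate, length_join_replicate]
      have := Nat.mul_le_mul_right (iterW (nonsimpleM p q) m false).length hpq
      omega

/-- take of a power -/
lemma take_pow_lt (X Y : List Bool) (N e s : ℕ) (he : e < N) (hs : s ≤ X.length) :
    ((List.replicate N X).flatten ++ Y).take (e * X.length + s)
      = (List.replicate e X).flatten ++ X.take s := by
  induction e generalizing N with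
  | zero =>
      obtain ⟨N', rfl⟩ : ∃ N', N = N' + 1 := ⟨N - 1, by omega⟩
      rw [List.replicate_succ, join_cons', List.append_assoc]
      simp only [Nat.zero_mul, Nat.zero_add]
      rw [List.take_append]
      have : s - X.length = 0 := by omega
      simp [this]
  | succ e ih =>
      obtain ⟨N', rfl⟩ : ∃ N', N = N' + 1 := ⟨N - 1, by omega⟩
      rw [List.replicate_succ, join_cons', List.append_assoc]
      have harith : (e + 1) * X.length + s = X.length + (e * X.length + s) := by ring
      rw [harith, List.take_length_add_append, ih N' (by omega)]
      rw [List.replicate_succ, join_cons', List.append_assoc]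

lemma take_pow_eq (X Y : List Bool) (N s : ℕ) :
    ((List.replicate N X).flatten ++ Y).take (N * X.length + s)
      = (List.replicate N X).flatten ++ Y.take s := by
  have h : N * X.length = ((List.replicate N X).flatten).length := (length_join_replicate N X).symm
  rw [h, List.take_length_add_append]

/-- main counting lemma -/
lemma count_take (p q : ℕ) (hq : 1 ≤ q) (hpq : q < p) : ∀ m : ℕ,
    (∀ r, r < (iterW (nonsimpleM p q) m false).length →
      countB ((iterW (nonsimpleM p q) m false).take r) = gB (nonsimpleM p q) m r) ∧
    (∀ r, r < (iterW (nonsimpleM p q) m true).length →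
      countB ((iterW (nonsimpleM p q) m true).take r) = gB (nonsimpleM p q) m r) := by
  intro m
  induction m with
  | zero =>
      constructor <;>
      · intro r hr
        have : r = 0 := by simpa [iterW] using hr
        subst this
        simp [countB, gB]
  | succ m ih =>
      set X := iterW (nonsimpleM p q) m false with hX
      set Y := iterW (nonsimpleM p q) m true with hY
      have hL : 1 ≤ X.length := len_pos p q m false
      have hVU : Y.length ≤ X.length := lenV_le_lenU p q (le_of_lt hpq) m
      have key : ∀ (N : ℕ), 1 ≤ N → ∀ r, r < N * X.length + Y.length →
          countB (((List.replicate N X).flatten ++ Y).take r) = gB (nonsimpleM p q) (m+1) r := by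
        intro N hN r hr
        have hdm := Nat.div_add_mod r X.length
        set e := r / X.length with he
        set s := r % X.length with hs
        have hslt : s < X.length := Nat.mod_lt _ (by omega)
        have hrhs : gB (nonsimpleM p q) (m+1) r = e * countB X + gB (nonsimpleM p q) m s := by
          show r / (iterW (nonsimpleM p q) m false).length * countB (iterW (nonsimpleM p q) m false)
              + gB (nonsimpleM p q) m (r % (iterW (nonsimpleM p q) m false).length)
            = e * countB X + gB (nonsimpleM p q) m s
          rw [← hX, ← he, ← hs]
        have heN : e ≤ N := by
          have hre : r < (N+1) * X.length := by
            have : (N+1) * X.length = N * X.length + X.length := by ring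
            omega
          have := (Nat.div_lt_iff_lt_mul (show 0 < X.length by omega)).mpr
            (by rw [Nat.mul_comm] at hre ⊢; exact hre)
          omega
        rcases lt_or_eq_of_le heN with helt | heq
        · have ht := take_pow_lt X Y N e s helt (le_of_lt hslt)
          rw [show e * X.length + s = r by rw [Nat.mul_comm]; omega] at ht
          rw [ht, countB_append, countB_join_replicate, (ih.1 s hslt), hrhs]
        · -- e = N : the take spills into Y
          have hsY : s < Y.length := by
            have h1 : X.length * e = X.length * N := by rw [heq]
            have h2 : X.length * N = N * X.length := by ring
            omega
          have ht := take_pow_eq X Y N s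
          rw [show N * X.length + s = r by rw [← heq, Nat.mul_comm]; exact hdm] at ht
          rw [ht, countB_append, countB_join_replicate, (ih.2 s hsY), hrhs, heq]
      constructor
      · intro r hr
        rw [iterW_false_succ] at hr ⊢
        rw [List.length_append, length_join_replicate] at hr
        exact key p (by omega) r hr
      · intro r hr
        rw [iterW_true_succ] at hr ⊢
        rw [List.length_append, length_join_replicate] at hr
        exact key q hq r hr

end Aux

section Aux2

lemma rev_applyM (p q : ℕ) (w : List Bool) :
    (applyM (nonsimpleM p q) w).reverse ++ [true] = true :: applyM (nonsimpleM p q) w.reverse := by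
  induction w with
  | nil => rfl
  | cons a w ih =>
      rw [applyM_cons, List.reverse_append, List.append_assoc]
      have h1 : (nonsimpleM p q a).reverse ++ [true] = true :: nonsimpleM p q a := by
        cases a <;> simp [nonsimpleM, List.reverse_append, List.reverse_replicate]
      rw [h1]
      rw [show ((applyM (nonsimpleM p q) w).reverse ++ (true :: nonsimpleM p q a))
          = ((applyM (nonsimpleM p q) w).reverse ++ [true]) ++ nonsimpleM p q a by simp]
      rw [ih, List.reverse_cons, applyM_append]
      simp [applyM]

lemma wNon_palindrome (p q : ℕ) (k : ℕ) :
    (wNon (nonsimpleM p q) k).reverse = wNon (nonsimpleM p q) k := by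
  induction k with
  | zero => rfl
  | succ k ih =>
      show (true :: applyM (nonsimpleM p q) (wNon (nonsimpleM p q) k)).reverse = _
      rw [List.reverse_cons, rev_applyM, ih]
      rfl

lemma applyM_last (p q : ℕ) (hq : 1 ≤ q) (hp : 1 ≤ p) (u : List Bool) (hu : u ≠ []) :
    ∃ v, v ≠ [] ∧ applyM (nonsimpleM p q) u = v ++ [true] := by
  induction u with
  | nil => exact absurd rfl hu
  | cons a u ih =>
      rcases eq_or_ne u [] with rfl | hne
      · refine ⟨List.replicate (if a then q else p) false, ?_, ?_⟩
        · cases a <;> simp <;> omega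
        · cases a <;> simp [applyM, nonsimpleM]
      · obtain ⟨v, hv, hveq⟩ := ih hne
        exact ⟨nonsimpleM p q a ++ v, by simp [hv],
          by rw [applyM_cons, hveq, List.append_assoc]⟩

lemma wNon_suffix (p q : ℕ) (hq : 1 ≤ q) (hpq : q < p) (k : ℕ) :
    ∃ u, u ≠ [] ∧ iterW (nonsimpleM p q) (k+1) false = u ++ wNon (nonsimpleM p q) k := by
  induction k with
  | zero =>
      refine ⟨List.replicate p false, ?_, ?_⟩
      · simp; omega
      · simp [iterW, applyM, nonsimpleM, wNon]
  | succ k ih =>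
      obtain ⟨u, hu, hueq⟩ := ih
      obtain ⟨v, hv, hveq⟩ := applyM_last p q hq (by omega) u hu
      refine ⟨v, hv, ?_⟩
      rw [iterW_succ, hueq, applyM_append, hveq, List.append_assoc]
      rfl

lemma gB_eq_sum (p q : ℕ) (U : ℕ → ℕ)
    (hU : ∀ m, U m = (iterW (nonsimpleM p q) m false).length) :
    ∀ k r, gB (nonsimpleM p q) (k+1) r
      = ∑ j ∈ Finset.Icc 1 k, dig U k r j * U (j-1) := by
  intro k
  induction k with
  | zero =>
      intro r
      show r / (iterW (nonsimpleM p q) 0 false).length * countB (iterW (nonsimpleM p q) 0 false)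
          + gB (nonsimpleM p q) 0 _ = _
      simp [iterW, countB, gB]
  | succ k ih =>
      intro r
      have hcB : countB (iterW (nonsimpleM p q) (k+1) false) = U k := by
        rw [iterW_succ, countB_applyM p q, hU]
      have hlen : (iterW (nonsimpleM p q) (k+1) false).length = U (k+1) := (hU (k+1)).symm
      have hdigtop : dig U (k+1) r (k+1) = r / U (k+1) := by
        simp [dig, gdigits]
      have hdiglow : ∀ j ∈ Finset.Icc 1 k, dig U (k+1) r j * U (j-1)
          = dig U k (r % U (k+1)) j * U (j-1) := by
        intro j hj
        simp only [Finset.mem_Icc] at hj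
        have : k + 1 - j = (k - j) + 1 := by omega
        simp [dig, gdigits, this]
      show r / (iterW (nonsimpleM p q) (k+1) false).length
            * countB (iterW (nonsimpleM p q) (k+1) false)
          + gB (nonsimpleM p q) (k+1) (r % (iterW (nonsimpleM p q) (k+1) false).length) = _
      rw [hcB, hlen, ih (r % U (k+1)),
        Finset.sum_Icc_succ_top (show 1 ≤ k + 1 by omega), Finset.sum_congr rfl hdiglow,
        hdigtop, show k + 1 - 1 = k from rfl]
      omega

end Aux2

/-- the `B`-count of the length-`n` prefix `ŵ` of `w = lim w⁽ⁿ⁾`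
(non-simple case): `|ŵ|_B = U_k − Σ_{j=1}^{k} e_j U_{j-1}`, where `(e_k, …, e_0)` is the
normal `U`-representation of `U_{k+1} − n`. -/
theorem stmt15 (p q : ℕ) (hq : 1 ≤ q) (hpq : q < p)
    (φ : Bool → List Bool) (hφ : φ = nonsimpleM p q)
    (U : ℕ → ℕ) (hU : ∀ m, U m = (iterW φ m false).length)
    (winf : ℕ → Bool) (hwinf : ∀ m, IsPrefixOf (wNon φ m) winf)
    (n k : ℕ) (hn : 0 < n) (hk : n ≤ (wNon φ k).length) :
    countB (prefWord winf n) =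
      U k - ∑ j ∈ Finset.Icc 1 k, dig U k (U (k+1) - n) j * U (j-1) := by
  subst hφ
  set W := wNon (nonsimpleM p q) k with hW
  set L := W.length with hL
  -- step 1: prefix of winf is prefix of W
  have h1 : prefWord winf n = W.take n := by
    have h := hwinf k
    rw [IsPrefixOf] at h
    rw [← hW, ← hL] at h
    rw [h, prefWord, prefWord, ← List.map_take, List.take_range, Nat.min_eq_left hk]
  -- step 2: palindrome flip
  have h2 : countB (W.take n) = countB (W.drop (L - n)) := by
    have hpal : W.reverse = W := wNon_palindrome p q k
    simp only [countB]
    rw [← List.count_reverse (a := true) (l := W.take n), List.reverse_take, hpal]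
  -- step 3: suffix decomposition
  obtain ⟨u, hu, hueq⟩ := wNon_suffix p q hq hpq k
  set X := iterW (nonsimpleM p q) (k+1) false with hXdef
  have hlenX : U (k+1) = u.length + L := by
    rw [hU (k+1), ← hXdef, hueq, List.length_append]
  have hr'eq : U (k+1) - n = u.length + (L - n) := by omega
  have h3 : X.drop (U (k+1) - n) = W.drop (L - n) := by
    rw [hueq, hr'eq, List.drop_length_add_append]
  -- step 4: total count
  have h4 : countB X = U k := by
    rw [hXdef, iterW_succ, countB_applyM p q, hU]
  -- step 5: count of the take via gB
  have hr' : U (k+1) - n < X.length := by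
    have hx : X.length = U (k+1) := by rw [hU (k+1)]
    omega
  have h5 : countB (X.take (U (k+1) - n)) = gB (nonsimpleM p q) (k+1) (U (k+1) - n) :=
    (count_take p q hq hpq (k+1)).1 _ hr'
  rw [gB_eq_sum p q U hU] at h5
  -- step 6: split
  have h6 : countB (X.take (U (k+1) - n)) + countB (X.drop (U (k+1) - n)) = countB X := by
    rw [← countB_append, List.take_append_drop]
  rw [h1, h2, ← h3]
  omega
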